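/- For every ξ > 0 and every real t, one has |χ(t − iξ)| ≤ χ(−iξ) · |χ(t)|, where χ(−iξ) = exp( d₁ r^d ∫₀¹ (e^{ξu/r^{d/2}} − 1 − ξu/r^{d/2}) u^{−1−d/γ} du ) is a positive real number. (Lemma 2.3(i).) -/

import Mathlib

open MeasureTheory

noncomputable section

/-- ρ = r^{d/2} -/
def rho (d : ℕ) (r : ℝ) : ℝ := r ^ ((d : ℝ) / 2)

/-- χ(z) = exp( d₁ r^d ∫₀¹ (e^{izu/r^{d/2}} − 1 − izu/r^{d/2}) u^{−1−d/γ} du ) -/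
def chiC (d : ℕ) (γ r : ℝ) (z : ℂ) : ℂ :=
  Complex.exp ((((2 - (d : ℝ) / γ) * r ^ d : ℝ) : ℂ) *
    ∫ u in (0:ℝ)..1,
      (Complex.exp (Complex.I * z * (u : ℂ) / ((rho d r : ℝ) : ℂ)) - 1 -
          Complex.I * z * (u : ℂ) / ((rho d r : ℝ) : ℂ)) *
        ((u ^ (-1 - (d : ℝ) / γ) : ℝ) : ℂ))

/-- the integrand of χ -/
def chiInt (d : ℕ) (γ r : ℝ) (z : ℂ) (u : ℝ) : ℂ :=
  (Complex.exp (Complex.I * z * (u : ℂ) / ((rho d r : ℝ) : ℂ)) - 1 -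
      Complex.I * z * (u : ℂ) / ((rho d r : ℝ) : ℂ)) *
    ((u ^ (-1 - (d : ℝ) / γ) : ℝ) : ℂ)

lemma exp_taylor_bound (R : ℝ) (w : ℂ) (hw : ‖w‖ ≤ R) :
    ‖Complex.exp w - 1 - w‖ ≤ (Real.exp R + 2 + R) * ‖w‖ ^ 2 := by
  have h0 : 0 ≤ R := le_trans (norm_nonneg w) hw
  have hR1 : (1:ℝ) ≤ Real.exp R := Real.one_le_exp h0
  by_cases h1 : ‖w‖ ≤ 1
  · have h := Complex.norm_exp_sub_one_sub_id_le h1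
    nlinarith [sq_nonneg (‖w‖)]
  · push_neg at h1
    have h2 : ‖Complex.exp w - 1 - w‖
        ≤ Real.exp R + 1 + ‖w‖ := by
      calc ‖Complex.exp w - 1 - w‖
          ≤ ‖Complex.exp w - 1‖ + ‖w‖ := by
            simpa using norm_sub_le (Complex.exp w - 1) w
        _ ≤ ‖Complex.exp w‖ + 1 + ‖w‖ := by
            have := norm_sub_le (Complex.exp w) 1
            simpa using add_le_add_right this (‖w‖)
        _ ≤ Real.exp R + 1 + ‖w‖ := by
            have : ‖Complex.exp w‖ ≤ Real.exp R := by
              rw [Complex.norm_exp]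
              exact Real.exp_le_exp.2 (le_trans (Complex.re_le_norm w) hw)
            linarith
    have h3 : (1:ℝ) ≤ ‖w‖ ^ 2 := by nlinarith
    nlinarith

lemma chiInt_integrable (d : ℕ) (hd : 1 ≤ d) (γ : ℝ) (hγ : (d : ℝ) < γ)
    (r : ℝ) (hr : 1 ≤ r) (z : ℂ) :
    IntervalIntegrable (chiInt d γ r z) volume 0 1 := by
  have hd1 : (1:ℝ) ≤ (d:ℝ) := by exact_mod_cast hd
  have hγ0 : 0 < γ := lt_of_lt_of_le (by linarith) hγ.le
  have hdγ : (d:ℝ) / γ < 1 := (div_lt_one hγ0).2 hγ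
  have hdγ0 : 0 < (d:ℝ) / γ := div_pos (by linarith) hγ0
  set p : ℝ := -1 - (d:ℝ)/γ with hp
  have hp2 : 0 ≤ 2 + p := by simp [hp]; linarith
  have hρ : 1 ≤ rho d r := Real.one_le_rpow hr (by positivity)
  have hρ0 : 0 < rho d r := lt_of_lt_of_le one_pos hρ
  set R : ℝ := ‖z‖ with hR
  have hR0 : 0 ≤ R := norm_nonneg z
  set C : ℝ := (Real.exp R + 2 + R) * R ^ 2 with hC
  rw [intervalIntegrable_iff, Set.uIoc_of_le (zero_le_one)]
  apply Integrable.mono' (integrable_const C)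
  · apply ContinuousOn.aestronglyMeasurable _ measurableSet_Ioc
    apply ContinuousOn.mul
    · apply Continuous.continuousOn; fun_prop
    · exact Complex.continuous_ofReal.comp_continuousOn
        (continuousOn_id.rpow_const (fun x hx => Or.inl (ne_of_gt hx.1)))
  · rw [ae_restrict_iff' measurableSet_Ioc]
    filter_upwards with u hu
    obtain ⟨hu0, hu1⟩ := hu
    set w : ℂ := Complex.I * z * (u : ℂ) / ((rho d r : ℝ) : ℂ) with hw
    have habsw : ‖w‖ = R * u / rho d r := by
      simp [hw, norm_div, norm_mul, Complex.norm_real, abs_of_pos hu0,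
        abs_of_pos hρ0, hR]
    have hwle : ‖w‖ ≤ R := by
      rw [habsw]
      calc R * u / rho d r ≤ R * u := div_le_self (by positivity) hρ
        _ ≤ R * 1 := by nlinarith
        _ = R := mul_one R
    have hbound := exp_taylor_bound R w hwle
    have hup : (0:ℝ) ≤ u ^ p := Real.rpow_nonneg hu0.le p
    have hnorm : ‖chiInt d γ r z u‖
        = ‖Complex.exp w - 1 - w‖ * u ^ p := by
      simp [chiInt, norm_mul, Complex.norm_real, ← hw,
        abs_of_nonneg (Real.rpow_nonneg hu0.le _), hp]
    rw [hnorm]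
    have hw2 : ‖w‖ ^ 2 ≤ R ^ 2 * u ^ 2 := by
      rw [habsw]
      have h1 : R * u / rho d r ≤ R * u := div_le_self (by positivity) hρ
      have h2 : 0 ≤ R * u / rho d r := by positivity
      nlinarith
    have hu2p : u ^ (2:ℝ) * u ^ p ≤ 1 := by
      rw [← Real.rpow_add hu0]
      exact Real.rpow_le_one hu0.le hu1 (by linarith)
    have hu2p' : u ^ (2:ℕ) * u ^ p ≤ 1 := by
      rw [← Real.rpow_natCast u 2] at *
      simpa using hu2p
    calc ‖Complex.exp w - 1 - w‖ * u ^ p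
        ≤ ((Real.exp R + 2 + R) * ‖w‖ ^ 2) * u ^ p :=
          mul_le_mul_of_nonneg_right hbound hup
      _ ≤ ((Real.exp R + 2 + R) * (R ^ 2 * u ^ 2)) * u ^ p := by
          have hE : 0 ≤ Real.exp R + 2 + R := by positivity
          exact mul_le_mul_of_nonneg_right
            (mul_le_mul_of_nonneg_left hw2 hE) hup
      _ = (Real.exp R + 2 + R) * R ^ 2 * (u ^ (2:ℕ) * u ^ p) := by ring
      _ ≤ (Real.exp R + 2 + R) * R ^ 2 * 1 := by
          have hE : 0 ≤ (Real.exp R + 2 + R) * R ^ 2 := by positivity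
          exact mul_le_mul_of_nonneg_left hu2p' hE
      _ = C := by rw [mul_one]

lemma chiInt_re (d : ℕ) (γ r : ℝ) (z : ℂ) (u : ℝ) :
    (chiInt d γ r z u).re =
      (Real.exp (-z.im * u / rho d r) * Real.cos (z.re * u / rho d r)
        - 1 - (-z.im * u / rho d r)) * u ^ (-1 - (d:ℝ)/γ) := by
  simp only [chiInt, Complex.mul_re, Complex.ofReal_re, Complex.ofReal_im,
    Complex.sub_re, Complex.sub_im, Complex.one_re, Complex.one_im,
    Complex.div_ofReal_re, Complex.div_ofReal_im, Complex.exp_re, Complex.exp_im,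
    Complex.mul_im, Complex.I_re, Complex.I_im]
  ring

lemma chiInt_ofReal (d : ℕ) (γ r : ℝ) (ξ u : ℝ) :
    chiInt d γ r (-(Complex.I) * (ξ : ℂ)) u =
      (((Real.exp (ξ * u / rho d r) - 1 - ξ * u / rho d r) *
        u ^ (-1 - (d:ℝ)/γ) : ℝ) : ℂ) := by
  have h1 : Complex.I * (-(Complex.I) * (ξ:ℂ)) * (u:ℂ) / ((rho d r : ℝ):ℂ)
      = ((ξ * u / rho d r : ℝ) : ℂ) := by
    rw [show Complex.I * (-(Complex.I) * (ξ:ℂ)) = -(Complex.I * Complex.I) * ξ by ring,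
      Complex.I_mul_I]
    push_cast
    ring
  rw [chiInt, h1]
  push_cast
  ring


/-- Lemma 2.3(i): |χ(t − iξ)| ≤ χ(−iξ)·|χ(t)| for ξ > 0, where χ(−iξ) is the positive real
number exp( d₁ r^d ∫₀¹ (e^{ξu/r^{d/2}} − 1 − ξu/r^{d/2}) u^{−1−d/γ} du ). -/
theorem chi_shift_down (d : ℕ) (hd : 1 ≤ d) (γ : ℝ) (hγ : (d : ℝ) < γ)
    (r : ℝ) (hr : 1 ≤ r) (ξ : ℝ) (hξ : 0 < ξ) (t : ℝ) :
    chiC d γ r (-(Complex.I) * (ξ : ℂ)) =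
      ((Real.exp ((2 - (d : ℝ) / γ) * r ^ d *
        ∫ u in (0:ℝ)..1,
          (Real.exp (ξ * u / rho d r) - 1 - ξ * u / rho d r) *
            u ^ (-1 - (d : ℝ) / γ)) : ℝ) : ℂ) ∧
    ‖chiC d γ r ((t : ℂ) - Complex.I * (ξ : ℂ))‖ ≤
      Real.exp ((2 - (d : ℝ) / γ) * r ^ d *
        ∫ u in (0:ℝ)..1,
          (Real.exp (ξ * u / rho d r) - 1 - ξ * u / rho d r) *
            u ^ (-1 - (d : ℝ) / γ)) *
      ‖chiC d γ r (t : ℂ)‖ := by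
  have hd1 : (1:ℝ) ≤ (d:ℝ) := by exact_mod_cast hd
  have hγ0 : 0 < γ := lt_of_lt_of_le (by linarith) hγ.le
  have hdγ : (d:ℝ) / γ < 1 := (div_lt_one hγ0).2 hγ
  have hρ : 1 ≤ rho d r := Real.one_le_rpow hr (by positivity)
  have hρ0 : 0 < rho d r := lt_of_lt_of_le one_pos hρ
  set p : ℝ := -1 - (d:ℝ)/γ with hp
  set c : ℝ := (2 - (d:ℝ)/γ) * r ^ d with hc
  set g : ℝ → ℝ := fun u => (Real.exp (ξ * u / rho d r) - 1 - ξ * u / rho d r) * u ^ p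
    with hgdef
  have hc0 : 0 ≤ c := by
    have : (0:ℝ) < r ^ d := by positivity
    nlinarith
  have hchi : ∀ z : ℂ, chiC d γ r z
      = Complex.exp ((c : ℂ) * ∫ u in (0:ℝ)..1, chiInt d γ r z u) := fun z => rfl
  have hI : ∀ z : ℂ, IntervalIntegrable (chiInt d γ r z) volume 0 1 :=
    fun z => chiInt_integrable d hd γ hγ r hr z
  have hIre : ∀ z : ℂ, IntervalIntegrable (fun u => (chiInt d γ r z u).re) volume 0 1 := by
    intro z
    have := hI z
    rw [intervalIntegrable_iff] at this ⊢
    exact this.re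
  have hre_int : ∀ z : ℂ,
      (∫ u in (0:ℝ)..1, chiInt d γ r z u).re
        = ∫ u in (0:ℝ)..1, (chiInt d γ r z u).re := by
    intro z
    have h := hI z
    rw [intervalIntegrable_iff, Set.uIoc_of_le zero_le_one] at h
    rw [intervalIntegral.integral_of_le zero_le_one,
      intervalIntegral.integral_of_le zero_le_one]
    simpa using (integral_re h).symm
  have hg_int : IntervalIntegrable g volume 0 1 := by
    simpa only [chiInt_ofReal, Complex.ofReal_re]
      using hIre (-(Complex.I) * (ξ : ℂ))
  have habs : ∀ z : ℂ, ‖chiC d γ r z‖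
      = Real.exp (c * ∫ u in (0:ℝ)..1, (chiInt d γ r z u).re) := by
    intro z
    rw [hchi, Complex.norm_exp, Complex.re_ofReal_mul, hre_int]
  constructor
  · have h1 : (∫ u in (0:ℝ)..1, chiInt d γ r (-(Complex.I) * (ξ:ℂ)) u)
        = (((∫ u in (0:ℝ)..1, g u) : ℝ) : ℂ) := by
      simp only [chiInt_ofReal, hgdef]
      exact intervalIntegral.integral_ofReal
    rw [hchi, h1, ← Complex.ofReal_mul, Complex.ofReal_exp]
  · have hre1 : ∀ u : ℝ,
        (chiInt d γ r ((t : ℂ) - Complex.I * (ξ:ℂ)) u).re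
          = (Real.exp (ξ * u / rho d r) * Real.cos (t * u / rho d r)
              - 1 - ξ * u / rho d r) * u ^ p := by
      intro u
      rw [chiInt_re, hp]
      norm_num [Complex.sub_re, Complex.sub_im, Complex.mul_re, Complex.mul_im]
    have hre2 : ∀ u : ℝ,
        (chiInt d γ r ((t : ℂ)) u).re
          = (Real.cos (t * u / rho d r) - 1) * u ^ p := by
      intro u
      rw [chiInt_re, hp]
      norm_num
    have hpt : ∀ u ∈ Set.Icc (0:ℝ) 1,
        (chiInt d γ r ((t : ℂ) - Complex.I * (ξ:ℂ)) u).re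
          ≤ g u + (chiInt d γ r ((t : ℂ)) u).re := by
      intro u hu
      rw [hre1, hre2, hgdef]
      have hu0 : 0 ≤ u := hu.1
      have ha : 0 ≤ ξ * u / rho d r := by positivity
      have h1 : 1 ≤ Real.exp (ξ * u / rho d r) := Real.one_le_exp ha
      have h2 : Real.cos (t * u / rho d r) ≤ 1 := Real.cos_le_one _
      have h3 : 0 ≤ u ^ p := Real.rpow_nonneg hu0 p
      have key : 0 ≤ ((Real.exp (ξ * u / rho d r) - 1)
          * (1 - Real.cos (t * u / rho d r))) * u ^ p :=
        mul_nonneg (mul_nonneg (by linarith) (by linarith)) h3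
      nlinarith
    calc ‖chiC d γ r ((t : ℂ) - Complex.I * (ξ:ℂ))‖
        = Real.exp (c * ∫ u in (0:ℝ)..1,
            (chiInt d γ r ((t : ℂ) - Complex.I * (ξ:ℂ)) u).re) := habs _
      _ ≤ Real.exp (c * ∫ u in (0:ℝ)..1,
            (g u + (chiInt d γ r ((t : ℂ)) u).re)) := by
          apply Real.exp_le_exp.2
          apply mul_le_mul_of_nonneg_left _ hc0
          exact intervalIntegral.integral_mono_on zero_le_one (hIre _)
            (hg_int.add (hIre _)) hpt
      _ = Real.exp (c * ((∫ u in (0:ℝ)..1, g u)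
            + ∫ u in (0:ℝ)..1, (chiInt d γ r ((t : ℂ)) u).re)) := by
          rw [intervalIntegral.integral_add hg_int (hIre _)]
      _ = Real.exp (c * ∫ u in (0:ℝ)..1, g u)
            * Real.exp (c * ∫ u in (0:ℝ)..1, (chiInt d γ r ((t : ℂ)) u).re) := by
          rw [mul_add, Real.exp_add]
      _ = Real.exp (c * ∫ u in (0:ℝ)..1, g u) * ‖chiC d γ r (t : ℂ)‖ := by
          rw [habs]
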